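/- Let u and v be unit vectors in ℝ^n with ⟨u, v⟩ = −1 + ε for some ε ∈ (0, 1). Let d = u − ⟨u, v⟩·v. Then u + v ≠ 0, d ≠ 0, and ⟨(u + v)/‖u + v‖, d/‖d‖⟩ = √(1 − ε/2). -/

import Mathlib

open scoped RealInnerProductSpace

/-- For unit vectors `u`, `v` with `⟪u, v⟫ = -1 + ε`, `ε ∈ (0,1)`,
and `d = u - ⟪u, v⟫ • v` (the component of `u` orthogonal to `v`), one has
`u + v ≠ 0`, `d ≠ 0`, and the angle identity
`⟪(u + v)/‖u + v‖, d/‖d‖⟫ = √(1 - ε/2)` (i.e. the heavy ball direction makes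
angle `α/2` with the surrogate constraint direction). -/
theorem heavy_ball_surrogate_angle {n : ℕ}
    (u v : EuclideanSpace ℝ (Fin n))
    (hu : ‖u‖ = 1) (hv : ‖v‖ = 1)
    (ε : ℝ) (hε0 : 0 < ε) (hε1 : ε < 1)
    (hangle : ⟪u, v⟫ = -1 + ε)
    (d : EuclideanSpace ℝ (Fin n)) (hd : d = u - ⟪u, v⟫ • v) :
    u + v ≠ 0 ∧ d ≠ 0 ∧
      ⟪‖u + v‖⁻¹ • (u + v), ‖d‖⁻¹ • d⟫ = Real.sqrt (1 - ε / 2) := by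
  have huu : ⟪u, u⟫ = 1 := by
    rw [real_inner_self_eq_norm_sq, hu]; norm_num
  have hvv : ⟪v, v⟫ = 1 := by
    rw [real_inner_self_eq_norm_sq, hv]; norm_num
  have hvu : ⟪v, u⟫ = -1 + ε := by rw [real_inner_comm]; exact hangle
  have hnsum : ‖u + v‖ ^ 2 = 2 * ε := by
    rw [← real_inner_self_eq_norm_sq, real_inner_add_add_self, huu, hvv, hangle]; ring
  have hne : u + v ≠ 0 := by
    intro h
    rw [h, norm_zero] at hnsum
    nlinarith
  have hnd : ‖d‖ ^ 2 = ε * (2 - ε) := by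
    rw [← real_inner_self_eq_norm_sq, hd]
    simp only [inner_sub_left, inner_sub_right, real_inner_smul_left, real_inner_smul_right,
      huu, hvv, hangle, hvu]
    ring
  have hdne : d ≠ 0 := by
    intro h
    rw [h, norm_zero] at hnd
    nlinarith
  have hip : ⟪u + v, d⟫ = ε * (2 - ε) := by
    rw [hd]
    simp only [inner_add_left, inner_sub_right, real_inner_smul_right, huu, hvv, hangle, hvu]
    ring
  refine ⟨hne, hdne, ?_⟩
  have hns' : ‖u + v‖ = Real.sqrt (2 * ε) := by
    rw [← hnsum, Real.sqrt_sq (norm_nonneg _)]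
  have hnd' : ‖d‖ = Real.sqrt (ε * (2 - ε)) := by
    rw [← hnd, Real.sqrt_sq (norm_nonneg _)]
  rw [real_inner_smul_left, real_inner_smul_right, hip, hns', hnd']
  have hm : (0:ℝ) ≤ ε * (2 - ε) := by nlinarith
  have h2ε : (0:ℝ) < 2 * ε := by linarith
  have hsm : Real.sqrt (ε * (2 - ε)) * Real.sqrt (ε * (2 - ε)) = ε * (2 - ε) :=
    Real.mul_self_sqrt hm
  have hsne : Real.sqrt (2 * ε) ≠ 0 := by positivity
  have hmpos : (0:ℝ) < ε * (2 - ε) := by nlinarith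
  have key : (Real.sqrt (ε * (2 - ε)))⁻¹ * (ε * (2 - ε)) = Real.sqrt (ε * (2 - ε)) := by
    rw [inv_mul_eq_iff_eq_mul₀ (by positivity)]
    exact hsm.symm
  rw [key, ← Real.sqrt_inv, ← Real.sqrt_mul (by positivity)]
  congr 1
  field_simp
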